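/- Let A = (Q, Σ, ·, i, F) be a minimal, partially ordered and confluent DFA. The language L(A) is 2-piecewise testable if and only if for every letter a ∈ Σ and every state p such that p = i·w for some word w containing at least one occurrence of a, one has p·ua = p·aua for every word u ∈ Σ*. -/

import Mathlib

/-- `subk k w` is the set of scattered subwords of `w` of length at most `k`. -/
def subk {α : Type*} (k : ℕ) (w : List α) : Set (List α) :=
  {u | u.length ≤ k ∧ u.Sublist w}

/-- Two words are `k`-equivalent if they have the same subwords of length at most `k`. -/
def kEquiv {α : Type*} (k : ℕ) (u v : List α) : Prop :=
  subk k u = subk k v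

/-- A language is `k`-piecewise testable (Simon's characterization):
`k`-equivalent words are equi-members. -/
def IsPT {α : Type*} (k : ℕ) (L : Language α) : Prop :=
  ∀ u v : List α, kEquiv k u v → (u ∈ L ↔ v ∈ L)

/-- A DFA is minimal if all states are reachable and pairwise distinguishable. -/
def IsMinimalDFA {α σ : Type*} (A : DFA α σ) : Prop :=
  (∀ q : σ, ∃ w : List α, A.eval w = q) ∧
  ∀ p q : σ,
    (∀ w : List α, (A.evalFrom p w ∈ A.accept ↔ A.evalFrom q w ∈ A.accept)) → p = q

/-- There is a simple path (pairwise distinct states) with `m` transitions in the DFA `A`. -/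
def DFAHasSimplePath {α σ : Type*} (A : DFA α σ) (m : ℕ) : Prop :=
  ∃ (qs : Fin (m + 1) → σ) (as : Fin m → α),
    Function.Injective qs ∧ ∀ i : Fin m, A.step (qs i.castSucc) (as i) = qs i.succ

/-- The depth of a DFA: the number of transitions on a longest simple path. -/
noncomputable def dfaDepth {α σ : Type*} (A : DFA α σ) : ℕ :=
  sSup {m | DFAHasSimplePath A m}

/-- There is a simple path (pairwise distinct states) with `m` transitions in the NFA `A`. -/
def NFAHasSimplePath {α σ : Type*} (A : NFA α σ) (m : ℕ) : Prop :=
  ∃ (qs : Fin (m + 1) → σ) (as : Fin m → α),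
    Function.Injective qs ∧ ∀ i : Fin m, qs i.succ ∈ A.step (qs i.castSucc) (as i)

/-- The depth of an NFA: the number of transitions on a longest simple path. -/
noncomputable def nfaDepth {α σ : Type*} (A : NFA α σ) : ℕ :=
  sSup {m | NFAHasSimplePath A m}

/-- Reachability between states of a DFA. -/
def dfaReach {α σ : Type*} (A : DFA α σ) (p q : σ) : Prop :=
  ∃ w : List α, A.evalFrom p w = q

/-- A DFA is partially ordered if its reachability relation is a partial order. -/
def IsPartiallyOrderedDFA {α σ : Type*} (A : DFA α σ) : Prop :=
  ∀ p q : σ, dfaReach A p q → dfaReach A q p → p = q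

/-- A DFA is confluent if it is `Γ`-confluent for every subalphabet `Γ`. -/
def IsConfluentDFA {α σ : Type*} (A : DFA α σ) : Prop :=
  ∀ (Γ : Set α) (q : σ) (u v : List α), (∀ a ∈ u, a ∈ Γ) → (∀ a ∈ v, a ∈ Γ) →
    ∃ w : List α, (∀ a ∈ w, a ∈ Γ) ∧
      A.evalFrom (A.evalFrom q u) w = A.evalFrom (A.evalFrom q v) w

open List

namespace Stmt4Aux

variable {α : Type*}

theorem pair_sublist_cons {e f c : α} {t : List α} :
    [e, f] <+ c :: t ↔ (e = c ∧ f ∈ t) ∨ [e, f] <+ t := by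
  constructor
  · intro h
    cases h with
    | cons _ h => exact Or.inr h
    | cons_cons _ h => exact Or.inl ⟨rfl, singleton_sublist.mp h⟩
  · rintro (⟨rfl, hf⟩ | h)
    · exact (singleton_sublist.mpr hf).cons₂ e
    · exact h.cons c

theorem pair_sublist_append {e f : α} {x y : List α} :
    [e, f] <+ x ++ y ↔ [e, f] <+ x ∨ [e, f] <+ y ∨ (e ∈ x ∧ f ∈ y) := by
  constructor
  · intro h
    rcases sublist_append_iff.mp h with ⟨l₁, l₂, heq, h1, h2⟩
    rcases l₁ with _ | ⟨e', _ | ⟨f', l₁⟩⟩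
    · simp only [nil_append] at heq
      rw [← heq] at h2
      exact Or.inr (Or.inl h2)
    · simp only [cons_append, nil_append, List.cons.injEq] at heq
      obtain ⟨rfl, heq⟩ := heq
      rw [← heq] at h2
      exact Or.inr (Or.inr ⟨singleton_sublist.mp h1, singleton_sublist.mp h2⟩)
    · simp only [cons_append, List.cons.injEq] at heq
      obtain ⟨rfl, rfl, heq⟩ := heq
      obtain ⟨rfl, rfl⟩ := List.append_eq_nil_iff.mp heq.symm
      exact Or.inl h1
  · rintro (h | h | ⟨h1, h2⟩)
    · exact h.trans (sublist_append_left x y)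
    · exact h.trans (sublist_append_right x y)
    · exact (singleton_sublist.mpr h1).append (singleton_sublist.mpr h2)

theorem kEquiv_of {u v : List α}
    (h1 : ∀ e, e ∈ u ↔ e ∈ v) (h2 : ∀ e f, [e, f] <+ u ↔ [e, f] <+ v) :
    kEquiv 2 u v := by
  have aux : ∀ (x y : List α), (∀ e, e ∈ x → e ∈ y) → (∀ e f, [e, f] <+ x → [e, f] <+ y) →
      ∀ l : List α, l.length ≤ 2 → l <+ x → l <+ y := by
    intro x y hx hxy l hl hs
    match l with
    | [] => exact nil_sublist _
    | [e] => exact singleton_sublist.mpr (hx e (singleton_sublist.mp hs))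
    | [e, f] => exact hxy e f hs
    | e :: f :: g :: l => simp at hl
  ext l
  simp only [subk, Set.mem_setOf_eq]
  exact ⟨fun ⟨hl, hs⟩ => ⟨hl, aux u v (fun e => (h1 e).mp) (fun e f => (h2 e f).mp) l hl hs⟩,
         fun ⟨hl, hs⟩ => ⟨hl, aux v u (fun e => (h1 e).mpr) (fun e f => (h2 e f).mpr) l hl hs⟩⟩

theorem keq_single {u v : List α} (h : kEquiv 2 u v) (e : α) : e ∈ u ↔ e ∈ v := by
  have := Set.ext_iff.mp h [e]
  simpa [subk] using this

theorem keq_pair {u v : List α} (h : kEquiv 2 u v) (e f : α) :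
    [e, f] <+ u ↔ [e, f] <+ v := by
  have := Set.ext_iff.mp h [e, f]
  simpa [subk] using this

theorem subk_mono {k : ℕ} {u v : List α} (h : u <+ v) : subk k u ⊆ subk k v :=
  fun _ ⟨h1, h2⟩ => ⟨h1, h2.trans h⟩

end Stmt4Aux

namespace Stmt4Aux

variable {α : Type*} {σ : Type*} (A : DFA α σ)

/-- The key hypothesis (†). -/
def HT : Prop := ∀ (a : α) (p : σ), (∃ w : List α, A.eval w = p ∧ a ∈ w) →
    ∀ u : List α, A.evalFrom p (u ++ [a]) = A.evalFrom p (a :: (u ++ [a]))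

theorem evalFrom_app (s : σ) (x y : List α) :
    A.evalFrom s (x ++ y) = A.evalFrom (A.evalFrom s x) y := by
  simp [DFA.evalFrom, List.foldl_append]

theorem eval_append (x y : List α) : A.eval (x ++ y) = A.evalFrom (A.eval x) y := by
  simp [DFA.eval, DFA.evalFrom, List.foldl_append]

/-- deletion of a letter occurring before and after. -/
theorem AL1 (hH : HT A) {c : α} {x : List α} (hc : c ∈ x) (U V : List α) :
    A.eval (x ++ (c :: (U ++ c :: V))) = A.eval (x ++ (U ++ c :: V)) := by
  have h1 := hH c (A.eval x) ⟨x, rfl, hc⟩ U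
  have e1 : x ++ (c :: (U ++ c :: V)) = (x ++ (c :: (U ++ [c]))) ++ V := by simp
  have e2 : x ++ (U ++ c :: V) = (x ++ (U ++ [c])) ++ V := by simp
  rw [e1, e2, eval_append, eval_append, eval_append, eval_append, ← h1]

/-- swapping two already-seen letters. -/
theorem AL2 (hH : HT A) (hpo : IsPartiallyOrderedDFA A) {a b : α} {x : List α}
    (ha : a ∈ x) (hb : b ∈ x) (Z : List α) :
    A.eval (x ++ a :: b :: Z) = A.eval (x ++ b :: a :: Z) := by
  have key : A.evalFrom (A.eval x) [a, b] = A.evalFrom (A.eval x) [b, a] := by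
    have hba : A.evalFrom (A.eval x) [b, a] = A.evalFrom (A.eval x) [a, b, a] := by
      have := hH a (A.eval x) ⟨x, rfl, ha⟩ [b]; simpa using this
    have hab : A.evalFrom (A.eval x) [a, b] = A.evalFrom (A.eval x) [b, a, b] := by
      have := hH b (A.eval x) ⟨x, rfl, hb⟩ [a]; simpa using this
    refine hpo _ _ ⟨[a], ?_⟩ ⟨[b], ?_⟩
    · rw [hba]; simp [DFA.evalFrom]
    · rw [hab]; simp [DFA.evalFrom]
  have e1 : x ++ a :: b :: Z = (x ++ [a, b]) ++ Z := by simp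
  have e2 : x ++ b :: a :: Z = (x ++ [b, a]) ++ Z := by simp
  rw [e1, e2, eval_append, eval_append, eval_append, eval_append, key]

/-- deleting a whole inserted word whose letters occur before and after. -/
theorem AL3 (hH : HT A) :
    ∀ (w y Z : List α), (∀ c ∈ w, c ∈ y) → (∀ c ∈ w, c ∈ Z) →
      A.eval (y ++ (w ++ Z)) = A.eval (y ++ Z) := by
  intro w
  induction w with
  | nil => intro y Z _ _; rfl
  | cons c w' ih =>
    intro y Z hy hZ
    have hcy : c ∈ y := hy c (by simp)
    obtain ⟨Z₁, Z₂, rfl⟩ := append_of_mem (hZ c (by simp))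
    have key := AL1 A hH hcy (U := w' ++ Z₁) (V := Z₂)
    have e1 : y ++ (c :: ((w' ++ Z₁) ++ c :: Z₂)) = y ++ (c :: w' ++ (Z₁ ++ c :: Z₂)) := by simp
    have e2 : y ++ ((w' ++ Z₁) ++ c :: Z₂) = y ++ (w' ++ (Z₁ ++ c :: Z₂)) := by simp
    rw [e1, e2] at key
    rw [key]
    exact ih y (Z₁ ++ c :: Z₂) (fun d hd => hy d (by simp [hd])) (fun d hd => hZ d (by simp [hd]))

/-- The master lemma: an alphabet-preserving permutation of a block all of whose letters
occur in the suffix does not change the reached state (uses confluence). -/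
theorem AL4 (hH : HT A) (hconf : IsConfluentDFA A) {P P' Z : List α} (x : List α)
    (hPP' : ∀ c, c ∈ P ↔ c ∈ P') (hPZ : ∀ c ∈ P, c ∈ Z) :
    A.eval (x ++ (P ++ Z)) = A.eval (x ++ (P' ++ Z)) := by
  obtain ⟨w, hwΓ, hmerge⟩ := hconf {c | c ∈ P} (A.eval x) P P'
    (fun a ha => ha) (fun a ha => (hPP' a).mpr ha)
  have hP'Z : ∀ c ∈ P', c ∈ Z := fun c hc => hPZ c ((hPP' c).mpr hc)
  have h1 : A.eval (x ++ (P ++ (w ++ Z))) = A.eval (x ++ (P ++ Z)) := by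
    have := AL3 A hH w (x ++ P) Z (fun c hc => mem_append.mpr (Or.inr (hwΓ c hc)))
      (fun c hc => hPZ c (hwΓ c hc))
    simpa [List.append_assoc] using this
  have h2 : A.eval (x ++ (P' ++ (w ++ Z))) = A.eval (x ++ (P' ++ Z)) := by
    have := AL3 A hH w (x ++ P') Z (fun c hc => mem_append.mpr (Or.inr ((hPP' c).mp (hwΓ c hc))))
      (fun c hc => hPZ c (hwΓ c hc))
    simpa [List.append_assoc] using this
  have h3 : A.eval (x ++ (P ++ (w ++ Z))) = A.eval (x ++ (P' ++ (w ++ Z))) := by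
    have e : ∀ R : List α, x ++ (R ++ (w ++ Z)) = ((x ++ R) ++ w) ++ Z := by
      intro R; simp [List.append_assoc]
    rw [e, e, eval_append, eval_append, eval_append, eval_append, eval_append, eval_append,
      hmerge]
  rw [← h1, h3, h2]

theorem exists_last_split {c : α} {h : List α} (hc : c ∈ h) :
    ∃ g m, h = g ++ c :: m ∧ c ∉ m := by
  induction h using List.reverseRecOn with
  | nil => simp at hc
  | append_singleton h₀ d ih =>
    by_cases hd : d = c
    · subst hd; exact ⟨h₀, [], by simp, by simp⟩
    · have hch : c ∈ h₀ := by
        rcases mem_append.mp hc with h | h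
        · exact h
        · simp at h; exact absurd h.symm hd
      obtain ⟨g, m, rfl, hm⟩ := ih hch
      refine ⟨g, m ++ [d], by simp, ?_⟩
      simp only [mem_append, mem_singleton]
      rintro (h | h)
      · exact hm h
      · exact hd h.symm

theorem exists_first_split {c : α} {l : List α} (hc : c ∈ l) :
    ∃ s t, l = s ++ c :: t ∧ c ∉ s := by
  induction l with
  | nil => simp at hc
  | cons d l ih =>
    by_cases hd : d = c
    · subst hd; exact ⟨[], l, rfl, by simp⟩
    · have hcl : c ∈ l := by
        rcases mem_cons.mp hc with h | h
        · exact absurd h.symm hd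
        · exact h
      obtain ⟨s, t, rfl, hs⟩ := ih hcl
      refine ⟨d :: s, t, rfl, ?_⟩
      simp only [mem_cons]
      rintro (h | h)
      · exact hd h.symm
      · exact hs h

/-- absorption: appending a letter `c` such that `[d,c]` is a subword of `h` for every
letter `d` of `h` does not change the state. -/
theorem AL5 (hH : HT A) (hpo : IsPartiallyOrderedDFA A) {c : α} {h : List α}
    (hc : c ∈ h) (hW : ∀ d ∈ h, [d, c] <+ h) :
    A.eval (h ++ [c]) = A.eval h := by
  obtain ⟨g, m, rfl, hcm⟩ := exists_last_split hc
  have hcg : c ∈ g := by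
    rcases pair_sublist_append.mp (hW c hc) with h1 | h1 | ⟨h1, _⟩
    · exact h1.subset (by simp)
    · rcases pair_sublist_cons.mp h1 with ⟨_, h2⟩ | h2
      · exact absurd h2 hcm
      · exact absurd (h2.subset (by simp) : c ∈ m) hcm
    · exact h1
  have hmg : ∀ d ∈ m, d ∈ g := by
    intro d hd
    have hdh : d ∈ g ++ c :: m := by simp [hd]
    rcases pair_sublist_append.mp (hW d hdh) with h1 | h1 | ⟨h1, _⟩
    · exact h1.subset (by simp)
    · rcases pair_sublist_cons.mp h1 with ⟨_, h2⟩ | h2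
      · exact absurd h2 hcm
      · exact absurd (h2.subset (by simp) : c ∈ m) hcm
    · exact h1
  have comm : ∀ (m' g' : List α), c ∈ g' → (∀ d ∈ m', d ∈ g') →
      A.eval (g' ++ c :: m') = A.eval ((g' ++ m') ++ [c]) := by
    intro m'
    induction m' with
    | nil => intro g' _ _; simp
    | cons d m'' ih =>
      intro g' hcg' hmg'
      have hd : d ∈ g' := hmg' d (by simp)
      rw [AL2 A hH hpo hcg' hd m'']
      have e : g' ++ d :: c :: m'' = (g' ++ [d]) ++ c :: m'' := by simp
      rw [e, ih (g' ++ [d]) (by simp [hcg']) (fun d' hd' => by simp [hmg' d' (by simp [hd'])])]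
      congr 1
      simp
  have hdel : A.eval ((g ++ c :: m) ++ [c]) = A.eval (g ++ (m ++ [c])) := by
    have := AL1 A hH hcg (U := m) (V := ([] : List α))
    simpa using this
  rw [hdel, show g ++ (m ++ [c]) = (g ++ m) ++ [c] by simp, ← comm m g hcg hmg]

end Stmt4Aux

namespace Stmt4Aux

open List

variable {α : Type*} {σ : Type*}

theorem KL1 {c : α} {x y : List α} (hcx : c ∈ x) (hcy : c ∈ y) :
    kEquiv 2 (x ++ c :: y) (x ++ y) := by
  have SL : x ++ y <+ x ++ c :: y := (sublist_cons_self c y).append_left x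
  refine kEquiv_of (fun e => ?_) (fun e f => ?_)
  · simp only [mem_append, mem_cons]
    constructor
    · rintro (h | rfl | h)
      · exact Or.inl h
      · exact Or.inl hcx
      · exact Or.inr h
    · rintro (h | h)
      · exact Or.inl h
      · exact Or.inr (Or.inr h)
  · constructor
    · intro hs
      rcases pair_sublist_append.mp hs with h1 | h1 | ⟨h1, h2⟩
      · exact pair_sublist_append.mpr (Or.inl h1)
      · rcases pair_sublist_cons.mp h1 with ⟨rfl, h2⟩ | h2
        · exact pair_sublist_append.mpr (Or.inr (Or.inr ⟨hcx, h2⟩))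
        · exact pair_sublist_append.mpr (Or.inr (Or.inl h2))
      · rcases mem_cons.mp h2 with rfl | h3
        · exact pair_sublist_append.mpr (Or.inr (Or.inr ⟨h1, hcy⟩))
        · exact pair_sublist_append.mpr (Or.inr (Or.inr ⟨h1, h3⟩))
    · exact fun hs => hs.trans SL

theorem KL2_aux {a b : α} {x y : List α} (ha : a ∈ x) (hb : b ∈ x) (e f : α)
    (hs : [e, f] <+ x ++ a :: b :: y) : [e, f] <+ x ++ b :: a :: y := by
  rcases pair_sublist_append.mp hs with h1 | h1 | ⟨h1, h2⟩
  · exact pair_sublist_append.mpr (Or.inl h1)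
  · rcases pair_sublist_cons.mp h1 with ⟨rfl, h2⟩ | h2
    · refine pair_sublist_append.mpr (Or.inr (Or.inr ⟨ha, ?_⟩))
      rcases mem_cons.mp h2 with rfl | h3
      · simp
      · simp [h3]
    · rcases pair_sublist_cons.mp h2 with ⟨rfl, h3⟩ | h3
      · exact pair_sublist_append.mpr (Or.inr (Or.inr ⟨hb, by simp [h3]⟩))
      · exact pair_sublist_append.mpr (Or.inr (Or.inl ((h3.cons a).cons b)))
  · refine pair_sublist_append.mpr (Or.inr (Or.inr ⟨h1, ?_⟩))
    simp only [mem_cons] at h2 ⊢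
    tauto

theorem KL2 {a b : α} {x y : List α} (ha : a ∈ x) (hb : b ∈ x) :
    kEquiv 2 (x ++ a :: b :: y) (x ++ b :: a :: y) := by
  refine kEquiv_of (fun e => ?_) (fun e f => ?_)
  · simp only [mem_append, mem_cons]; tauto
  · exact ⟨KL2_aux ha hb e f, KL2_aux hb ha e f⟩

theorem KL3 {a : α} {x y : List α} (ha : a ∈ x) (hW : ∀ d ∈ x, [d, a] <+ x) :
    kEquiv 2 (x ++ a :: y) (x ++ y) := by
  have SL : x ++ y <+ x ++ a :: y := (sublist_cons_self a y).append_left x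
  refine kEquiv_of (fun e => ?_) (fun e f => ?_)
  · simp only [mem_append, mem_cons]
    constructor
    · rintro (h | rfl | h)
      · exact Or.inl h
      · exact Or.inl ha
      · exact Or.inr h
    · rintro (h | h)
      · exact Or.inl h
      · exact Or.inr (Or.inr h)
  · constructor
    · intro hs
      rcases pair_sublist_append.mp hs with h1 | h1 | ⟨h1, h2⟩
      · exact pair_sublist_append.mpr (Or.inl h1)
      · rcases pair_sublist_cons.mp h1 with ⟨rfl, h2⟩ | h2
        · exact pair_sublist_append.mpr (Or.inr (Or.inr ⟨ha, h2⟩))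
        · exact pair_sublist_append.mpr (Or.inr (Or.inl h2))
      · rcases mem_cons.mp h2 with rfl | h3
        · exact pair_sublist_append.mpr (Or.inl (hW e h1))
        · exact pair_sublist_append.mpr (Or.inr (Or.inr ⟨h1, h3⟩))
    · exact fun hs => hs.trans SL

theorem KL4_aux {P P' Z : List α} (x : List α)
    (hPP' : ∀ c, c ∈ P → c ∈ P') (hPZ : ∀ c ∈ P, c ∈ Z) (e f : α)
    (hs : [e, f] <+ x ++ (P ++ Z)) : [e, f] <+ x ++ (P' ++ Z) := by
  rcases pair_sublist_append.mp hs with h1 | h1 | ⟨h1, h2⟩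
  · exact pair_sublist_append.mpr (Or.inl h1)
  · rcases pair_sublist_append.mp h1 with h2 | h2 | ⟨h2, h3⟩
    · refine pair_sublist_append.mpr (Or.inr (Or.inl (pair_sublist_append.mpr
        (Or.inr (Or.inr ⟨hPP' e ?_, hPZ f ?_⟩)))))
      · exact h2.subset (by simp)
      · exact h2.subset (by simp)
    · exact pair_sublist_append.mpr (Or.inr (Or.inl (pair_sublist_append.mpr (Or.inr (Or.inl h2)))))
    · exact pair_sublist_append.mpr (Or.inr (Or.inl (pair_sublist_append.mpr
        (Or.inr (Or.inr ⟨hPP' e h2, h3⟩)))))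
  · rcases mem_append.mp h2 with h3 | h3
    · exact pair_sublist_append.mpr (Or.inr (Or.inr ⟨h1, mem_append.mpr (Or.inr (hPZ f h3))⟩))
    · exact pair_sublist_append.mpr (Or.inr (Or.inr ⟨h1, mem_append.mpr (Or.inr h3)⟩))

theorem KL4 {P P' Z : List α} (x : List α)
    (hPP' : ∀ c, c ∈ P ↔ c ∈ P') (hPZ : ∀ c ∈ P, c ∈ Z) :
    kEquiv 2 (x ++ (P ++ Z)) (x ++ (P' ++ Z)) := by
  have hP'Z : ∀ c ∈ P', c ∈ Z := fun c hc => hPZ c ((hPP' c).mpr hc)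
  refine kEquiv_of (fun e => ?_) (fun e f => ?_)
  · simp only [mem_append]
    have := hPP' e
    tauto
  · exact ⟨KL4_aux x (fun c hc => (hPP' c).mp hc) hPZ e f,
      KL4_aux x (fun c hc => (hPP' c).mpr hc) hP'Z e f⟩

end Stmt4Aux

namespace Stmt4Aux

open List

variable {α : Type*} {σ : Type*} (A : DFA α σ)

theorem main (hH : HT A) (hpo : IsPartiallyOrderedDFA A) (hconf : IsConfluentDFA A) :
    ∀ (N : ℕ) (u v h : List α), u.length + v.length ≤ N →
      kEquiv 2 (h ++ u) (h ++ v) → A.eval (h ++ u) = A.eval (h ++ v) := by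
  intro N
  induction N with
  | zero =>
    intro u v h hlen hk
    have hu : u = [] := List.length_eq_zero_iff.mp (by omega)
    have hv : v = [] := List.length_eq_zero_iff.mp (by omega)
    subst hu; subst hv; rfl
  | succ N ih =>
    intro u v h hlen hk
    have nilstep : ∀ (h' : List α) (b : α) (v' : List α), v'.length ≤ N →
        kEquiv 2 (h' ++ []) (h' ++ b :: v') → A.eval (h' ++ b :: v') = A.eval (h' ++ []) := by
      intro h' b v' hlen' hk'
      have hb : b ∈ h' := by
        have := (keq_single hk' b).mpr (by simp)
        simpa using this
      have hWb : ∀ d ∈ h', [d, b] <+ h' := by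
        intro d hd
        have p1 : [d, b] <+ h' ++ b :: v' :=
          pair_sublist_append.mpr (Or.inr (Or.inr ⟨hd, by simp⟩))
        have := (keq_pair hk' d b).mpr p1
        simpa using this
      have h0 := AL5 A hH hpo hb hWb
      have h1 : A.eval (h' ++ b :: v') = A.eval (h' ++ v') := by
        rw [show h' ++ b :: v' = (h' ++ [b]) ++ v' by simp, eval_append, h0, ← eval_append]
      rw [h1]
      have m1 : subk 2 (h' ++ []) ⊆ subk 2 (h' ++ v') := subk_mono (by simp)
      have m2 : subk 2 (h' ++ v') ⊆ subk 2 (h' ++ []) := by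
        rw [hk']
        exact subk_mono ((List.sublist_cons_self b v').append_left h')
      have hkk : kEquiv 2 (h' ++ []) (h' ++ v') := Set.Subset.antisymm m1 m2
      exact (ih [] v' h' (by simpa using hlen') hkk).symm
    rcases u with _ | ⟨a, u'⟩
    · rcases v with _ | ⟨b, v'⟩
      · rfl
      · exact (nilstep h b v' (by simp at hlen; omega) hk).symm
    · rcases v with _ | ⟨b, v'⟩
      · exact nilstep h a u' (by simp at hlen; omega) hk.symm
      · -- both nonempty
        by_cases hab : a = b
        · subst hab
          have e : ∀ w : List α, h ++ a :: w = (h ++ [a]) ++ w := by intro w; simp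
          rw [e u', e v']
          refine ih u' v' (h ++ [a]) (by simp at hlen ⊢; omega) ?_
          rw [← e u', ← e v']; exact hk
        · by_cases hDu : ∃ (U : List α) (c : α) (U' : List α),
              a :: u' = U ++ c :: U' ∧ c ∈ h ++ U ∧ c ∈ U'
          · obtain ⟨U, c, U', hsplit, hc1, hc2⟩ := hDu
            obtain ⟨W, V, rfl⟩ := append_of_mem hc2
            have hstate : A.eval (h ++ (a :: u')) = A.eval (h ++ (U ++ (W ++ c :: V))) := by
              rw [hsplit]
              have := AL1 A hH hc1 W V
              have e1 : (h ++ U) ++ (c :: (W ++ c :: V)) = h ++ (U ++ c :: (W ++ c :: V)) := by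
                simp
              have e2 : (h ++ U) ++ (W ++ c :: V) = h ++ (U ++ (W ++ c :: V)) := by simp
              rw [e1, e2] at this
              exact this
            have hkeq : kEquiv 2 (h ++ (U ++ (W ++ c :: V))) (h ++ (a :: u')) := by
              rw [hsplit]
              have := KL1 (x := h ++ U) (y := W ++ c :: V) hc1 hc2
              simpa [List.append_assoc, kEquiv] using this.symm
            rw [hstate]
            have hL := congrArg List.length hsplit
            simp only [List.length_cons, List.length_append] at hL
            have hlen2 : (U ++ (W ++ c :: V)).length + (b :: v').length ≤ N := by
              simp only [List.length_cons, List.length_append] at hlen ⊢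
              omega
            exact ih (U ++ (W ++ c :: V)) (b :: v') h hlen2 (hkeq.trans hk)
          · by_cases hDv : ∃ (U : List α) (c : α) (U' : List α),
                b :: v' = U ++ c :: U' ∧ c ∈ h ++ U ∧ c ∈ U'
            · obtain ⟨U, c, U', hsplit, hc1, hc2⟩ := hDv
              obtain ⟨W, V, rfl⟩ := append_of_mem hc2
              have hstate : A.eval (h ++ (b :: v')) = A.eval (h ++ (U ++ (W ++ c :: V))) := by
                rw [hsplit]
                have := AL1 A hH hc1 W V
                have e1 : (h ++ U) ++ (c :: (W ++ c :: V)) = h ++ (U ++ c :: (W ++ c :: V)) := by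
                  simp
                have e2 : (h ++ U) ++ (W ++ c :: V) = h ++ (U ++ (W ++ c :: V)) := by simp
                rw [e1, e2] at this
                exact this
              have hkeq : kEquiv 2 (h ++ (U ++ (W ++ c :: V))) (h ++ (b :: v')) := by
                rw [hsplit]
                have := KL1 (x := h ++ U) (y := W ++ c :: V) hc1 hc2
                simpa [List.append_assoc, kEquiv] using this.symm
              rw [hstate]
              have hL := congrArg List.length hsplit
              simp only [List.length_cons, List.length_append] at hL
              have hlen2 : (a :: u').length + (U ++ (W ++ c :: V)).length ≤ N := by
                simp only [List.length_cons, List.length_append] at hlen ⊢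
                omega
              exact ih (a :: u') (U ++ (W ++ c :: V)) h hlen2 (hk.trans hkeq.symm)
            · by_cases hWa : a ∈ h ∧ ∀ d ∈ h, [d, a] <+ h
              · obtain ⟨hah, hW⟩ := hWa
                have h0 := AL5 A hH hpo hah hW
                have h1 : A.eval (h ++ a :: u') = A.eval (h ++ u') := by
                  rw [show h ++ a :: u' = (h ++ [a]) ++ u' by simp, eval_append, h0, ← eval_append]
                rw [h1]
                refine ih u' (b :: v') h (by simp at hlen ⊢; omega) ?_
                exact ((KL3 (y := u') hah hW).symm).trans hk
              · by_cases hWb : b ∈ h ∧ ∀ d ∈ h, [d, b] <+ h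
                · obtain ⟨hbh, hW⟩ := hWb
                  have h0 := AL5 A hH hpo hbh hW
                  have h1 : A.eval (h ++ b :: v') = A.eval (h ++ v') := by
                    rw [show h ++ b :: v' = (h ++ [b]) ++ v' by simp, eval_append, h0,
                      ← eval_append]
                  rw [h1]
                  refine ih (a :: u') v' h (by simp at hlen ⊢; omega) ?_
                  exact hk.trans (KL3 (y := v') hbh hW)
                · -- no deletable, no absorbable head
                  have hav : a ∈ h ++ b :: v' := (keq_single hk a).mp (by simp)
                  have hbu : b ∈ h ++ a :: u' := (keq_single hk b).mpr (by simp)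
                  by_cases hah : a ∈ h
                  · -- derive a ∈ v'
                    have hav' : a ∈ v' := by
                      have hex : ∃ d ∈ h, ¬ [d, a] <+ h := by
                        by_contra hcon
                        push_neg at hcon
                        exact hWa ⟨hah, hcon⟩
                      obtain ⟨d₀, hd₀, hd₀a⟩ := hex
                      have p1 : [d₀, a] <+ h ++ a :: u' :=
                        pair_sublist_append.mpr (Or.inr (Or.inr ⟨hd₀, by simp⟩))
                      have p2 := (keq_pair hk d₀ a).mp p1
                      rcases pair_sublist_append.mp p2 with h1 | h1 | ⟨_, h1⟩
                      · exact absurd h1 hd₀a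
                      · rcases pair_sublist_cons.mp h1 with ⟨_, h2⟩ | h2
                        · exact h2
                        · exact h2.subset (by simp)
                      · rcases mem_cons.mp h1 with h2 | h2
                        · exact absurd h2 hab
                        · exact h2
                    by_cases hbh : b ∈ h
                    · -- case B : a ∈ h and b ∈ h
                      have hbu' : b ∈ u' := by
                        have hex : ∃ d ∈ h, ¬ [d, b] <+ h := by
                          by_contra hcon
                          push_neg at hcon
                          exact hWb ⟨hbh, hcon⟩
                        obtain ⟨d₁, hd₁, hd₁b⟩ := hex
                        have p1 : [d₁, b] <+ h ++ b :: v' :=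
                          pair_sublist_append.mpr (Or.inr (Or.inr ⟨hd₁, by simp⟩))
                        have p2 := (keq_pair hk d₁ b).mpr p1
                        rcases pair_sublist_append.mp p2 with h1 | h1 | ⟨_, h1⟩
                        · exact absurd h1 hd₁b
                        · rcases pair_sublist_cons.mp h1 with ⟨_, h2⟩ | h2
                          · exact h2
                          · exact h2.subset (by simp)
                        · rcases mem_cons.mp h1 with h2 | h2
                          · exact absurd h2 (Ne.symm hab)
                          · exact h2
                      obtain ⟨U₁, U₂, rfl⟩ := append_of_mem hbu'
                      obtain ⟨V₁, V₂, rfl⟩ := append_of_mem hav'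
                      have s1 : A.eval (h ++ a :: (U₁ ++ b :: U₂)) =
                          A.eval (h ++ a :: b :: (U₁ ++ b :: U₂)) := by
                        have := AL1 A hH (c := b) (x := h ++ [a])
                          (mem_append.mpr (Or.inl hbh)) U₁ U₂
                        have e1 : (h ++ [a]) ++ (b :: (U₁ ++ b :: U₂)) =
                            h ++ a :: b :: (U₁ ++ b :: U₂) := by simp
                        have e2 : (h ++ [a]) ++ (U₁ ++ b :: U₂) =
                            h ++ a :: (U₁ ++ b :: U₂) := by simp
                        rw [e1, e2] at this
                        exact this.symm
                      have s2 := AL2 A hH hpo hah hbh (U₁ ++ b :: U₂)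
                      have s3 : A.eval (h ++ b :: (V₁ ++ a :: V₂)) =
                          A.eval (h ++ b :: a :: (V₁ ++ a :: V₂)) := by
                        have := AL1 A hH (c := a) (x := h ++ [b])
                          (mem_append.mpr (Or.inl hah)) V₁ V₂
                        have e1 : (h ++ [b]) ++ (a :: (V₁ ++ a :: V₂)) =
                            h ++ b :: a :: (V₁ ++ a :: V₂) := by simp
                        have e2 : (h ++ [b]) ++ (V₁ ++ a :: V₂) =
                            h ++ b :: (V₁ ++ a :: V₂) := by simp
                        rw [e1, e2] at this
                        exact this.symm
                      rw [s1, s2, s3]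
                      have hlen2 : (U₁ ++ b :: U₂).length + (V₁ ++ a :: V₂).length ≤ N := by
                        simp only [List.length_cons, List.length_append] at hlen ⊢
                        omega
                      have k2 : kEquiv 2 (h ++ a :: b :: (U₁ ++ b :: U₂))
                          (h ++ a :: (U₁ ++ b :: U₂)) := by
                        have := KL1 (x := h ++ [a]) (y := U₁ ++ b :: U₂)
                          (mem_append.mpr (Or.inl hbh)) (by simp)
                        simpa [List.append_assoc] using this
                      have k1 := KL2 (x := h) (y := U₁ ++ b :: U₂) (a := a) (b := b) hah hbh
                      have k4 : kEquiv 2 (h ++ b :: a :: (V₁ ++ a :: V₂))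
                          (h ++ b :: (V₁ ++ a :: V₂)) := by
                        have := KL1 (x := h ++ [b]) (y := V₁ ++ a :: V₂)
                          (mem_append.mpr (Or.inl hah)) (by simp)
                        simpa [List.append_assoc] using this
                      have keq : kEquiv 2 ((h ++ [b, a]) ++ (U₁ ++ b :: U₂))
                          ((h ++ [b, a]) ++ (V₁ ++ a :: V₂)) := by
                        have := k1.symm.trans (k2.trans (hk.trans k4.symm))
                        simpa [List.append_assoc, kEquiv] using this
                      have := ih (U₁ ++ b :: U₂) (V₁ ++ a :: V₂) (h ++ [b, a]) hlen2 keq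
                      simpa [List.append_assoc] using this
                    · -- a ∈ h, b ∉ h : impossible
                      exfalso
                      have p1 : [b, a] <+ h ++ b :: v' :=
                        pair_sublist_append.mpr (Or.inr (Or.inl (pair_sublist_cons.mpr
                          (Or.inl ⟨rfl, hav'⟩))))
                      have p2 := (keq_pair hk b a).mpr p1
                      have hau' : a ∈ u' := by
                        rcases pair_sublist_append.mp p2 with h1 | h1 | ⟨h1, _⟩
                        · exact absurd (h1.subset (by simp) : b ∈ h) hbh
                        · rcases pair_sublist_cons.mp h1 with ⟨h2, _⟩ | h2
                          · exact absurd h2 (Ne.symm hab)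
                          · exact h2.subset (by simp)
                        · exact absurd h1 hbh
                      exact hDu ⟨[], a, u', by simp, by simpa using hah, hau'⟩
                  · by_cases hbh : b ∈ h
                    · -- b ∈ h, a ∉ h : impossible
                      exfalso
                      have hbu' : b ∈ u' := by
                        have hex : ∃ d ∈ h, ¬ [d, b] <+ h := by
                          by_contra hcon
                          push_neg at hcon
                          exact hWb ⟨hbh, hcon⟩
                        obtain ⟨d₁, hd₁, hd₁b⟩ := hex
                        have p1 : [d₁, b] <+ h ++ b :: v' :=
                          pair_sublist_append.mpr (Or.inr (Or.inr ⟨hd₁, by simp⟩))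
                        have p2 := (keq_pair hk d₁ b).mpr p1
                        rcases pair_sublist_append.mp p2 with h1 | h1 | ⟨_, h1⟩
                        · exact absurd h1 hd₁b
                        · rcases pair_sublist_cons.mp h1 with ⟨_, h2⟩ | h2
                          · exact h2
                          · exact h2.subset (by simp)
                        · rcases mem_cons.mp h1 with h2 | h2
                          · exact absurd h2 (Ne.symm hab)
                          · exact h2
                      have p1 : [a, b] <+ h ++ a :: u' :=
                        pair_sublist_append.mpr (Or.inr (Or.inl (pair_sublist_cons.mpr
                          (Or.inl ⟨rfl, hbu'⟩))))
                      have p2 := (keq_pair hk a b).mp p1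
                      have hbv' : b ∈ v' := by
                        rcases pair_sublist_append.mp p2 with h1 | h1 | ⟨h1, _⟩
                        · exact absurd (h1.subset (by simp) : a ∈ h) hah
                        · rcases pair_sublist_cons.mp h1 with ⟨h2, _⟩ | h2
                          · exact absurd h2 hab
                          · exact h2.subset (by simp)
                        · exact absurd h1 hah
                      exact hDv ⟨[], b, v', by simp, by simpa using hbh, hbv'⟩
                    · -- case A : a ∉ h, b ∉ h
                      have hav' : a ∈ v' := by
                        rcases mem_append.mp hav with h1 | h1
                        · exact absurd h1 hah
                        · rcases mem_cons.mp h1 with h2 | h2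
                          · exact absurd h2 hab
                          · exact h2
                      have hbu' : b ∈ u' := by
                        rcases mem_append.mp hbu with h1 | h1
                        · exact absurd h1 hbh
                        · rcases mem_cons.mp h1 with h2 | h2
                          · exact absurd h2 (Ne.symm hab)
                          · exact h2
                      have hbv' : b ∈ v' := by
                        have p1 : [a, b] <+ h ++ a :: u' :=
                          pair_sublist_append.mpr (Or.inr (Or.inl (pair_sublist_cons.mpr
                            (Or.inl ⟨rfl, hbu'⟩))))
                        have p2 := (keq_pair hk a b).mp p1
                        rcases pair_sublist_append.mp p2 with h1 | h1 | ⟨h1, _⟩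
                        · exact absurd (h1.subset (by simp) : a ∈ h) hah
                        · rcases pair_sublist_cons.mp h1 with ⟨h2, _⟩ | h2
                          · exact absurd h2 hab
                          · exact h2.subset (by simp)
                        · exact absurd h1 hah
                      obtain ⟨U₁, U₂, husplit, hbU₁⟩ := exists_first_split hbu'
                      subst husplit
                      have haU₂ : a ∈ U₂ := by
                        have p1 : [b, a] <+ h ++ b :: v' :=
                          pair_sublist_append.mpr (Or.inr (Or.inl (pair_sublist_cons.mpr
                            (Or.inl ⟨rfl, hav'⟩))))
                        have p2 := (keq_pair hk b a).mpr p1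
                        rcases pair_sublist_append.mp p2 with h1 | h1 | ⟨h1, _⟩
                        · exact absurd (h1.subset (by simp) : b ∈ h) hbh
                        · rcases pair_sublist_cons.mp h1 with ⟨h2, _⟩ | h2
                          · exact absurd h2 (Ne.symm hab)
                          · rcases pair_sublist_append.mp h2 with h3 | h3 | ⟨h3, _⟩
                            · exact absurd (h3.subset (by simp) : b ∈ U₁) hbU₁
                            · rcases pair_sublist_cons.mp h3 with ⟨_, h4⟩ | h4
                              · exact h4
                              · exact h4.subset (by simp)
                            · exact absurd h3 hbU₁
                        · exact absurd h1 hbh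
                      have hbU₂ : b ∈ U₂ := by
                        have p1 : [b, b] <+ h ++ b :: v' :=
                          pair_sublist_append.mpr (Or.inr (Or.inl (pair_sublist_cons.mpr
                            (Or.inl ⟨rfl, hbv'⟩))))
                        have p2 := (keq_pair hk b b).mpr p1
                        rcases pair_sublist_append.mp p2 with h1 | h1 | ⟨h1, _⟩
                        · exact absurd (h1.subset (by simp) : b ∈ h) hbh
                        · rcases pair_sublist_cons.mp h1 with ⟨h2, _⟩ | h2
                          · exact absurd h2 (Ne.symm hab)
                          · rcases pair_sublist_append.mp h2 with h3 | h3 | ⟨h3, _⟩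
                            · exact absurd (h3.subset (by simp) : b ∈ U₁) hbU₁
                            · rcases pair_sublist_cons.mp h3 with ⟨_, h4⟩ | h4
                              · exact h4
                              · exact h4.subset (by simp)
                            · exact absurd h3 hbU₁
                        · exact absurd h1 hbh
                      have hU₁U₂ : ∀ c ∈ U₁, c ∈ U₂ := by
                        intro c hcU₁
                        have hcv' : c ∈ v' := by
                          have p1 : [a, c] <+ h ++ a :: (U₁ ++ b :: U₂) :=
                            pair_sublist_append.mpr (Or.inr (Or.inl (pair_sublist_cons.mpr
                              (Or.inl ⟨rfl, by simp [hcU₁]⟩))))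
                          have p2 := (keq_pair hk a c).mp p1
                          rcases pair_sublist_append.mp p2 with h1 | h1 | ⟨h1, _⟩
                          · exact absurd (h1.subset (by simp) : a ∈ h) hah
                          · rcases pair_sublist_cons.mp h1 with ⟨h2, _⟩ | h2
                            · exact absurd h2 hab
                            · exact h2.subset (by simp)
                          · exact absurd h1 hah
                        have p1 : [b, c] <+ h ++ b :: v' :=
                          pair_sublist_append.mpr (Or.inr (Or.inl (pair_sublist_cons.mpr
                            (Or.inl ⟨rfl, hcv'⟩))))
                        have p2 := (keq_pair hk b c).mpr p1
                        rcases pair_sublist_append.mp p2 with h1 | h1 | ⟨h1, _⟩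
                        · exact absurd (h1.subset (by simp) : b ∈ h) hbh
                        · rcases pair_sublist_cons.mp h1 with ⟨h2, _⟩ | h2
                          · exact absurd h2 (Ne.symm hab)
                          · rcases pair_sublist_append.mp h2 with h3 | h3 | ⟨h3, _⟩
                            · exact absurd (h3.subset (by simp) : b ∈ U₁) hbU₁
                            · rcases pair_sublist_cons.mp h3 with ⟨_, h4⟩ | h4
                              · exact h4
                              · exact h4.subset (by simp)
                            · exact absurd h3 hbU₁
                        · exact absurd h1 hbh
                      have hPP' : ∀ c, c ∈ (a :: (U₁ ++ [b])) ↔ c ∈ (b :: a :: U₁) := by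
                        intro c
                        simp only [mem_cons, mem_append, mem_singleton]
                        tauto
                      have hPZ : ∀ c ∈ (a :: (U₁ ++ [b])), c ∈ U₂ := by
                        intro c hc
                        rcases mem_cons.mp hc with rfl | hc
                        · exact haU₂
                        · rcases mem_append.mp hc with hc | hc
                          · exact hU₁U₂ c hc
                          · rw [mem_singleton] at hc; subst hc; exact hbU₂
                      have hml := AL4 A hH hconf (P := a :: (U₁ ++ [b])) (P' := b :: a :: U₁)
                        (Z := U₂) h hPP' hPZ
                      have e1 : h ++ ((a :: (U₁ ++ [b])) ++ U₂) = h ++ a :: (U₁ ++ b :: U₂) := by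
                        simp
                      have e2 : h ++ ((b :: a :: U₁) ++ U₂) = h ++ b :: a :: (U₁ ++ U₂) := by
                        simp
                      rw [e1, e2] at hml
                      rw [hml]
                      have kml := KL4 (P := a :: (U₁ ++ [b])) (P' := b :: a :: U₁)
                        (Z := U₂) h hPP' hPZ
                      rw [e1, e2] at kml
                      have hlen2 : (a :: (U₁ ++ U₂)).length + v'.length ≤ N := by
                        simp only [List.length_cons, List.length_append] at hlen ⊢
                        omega
                      have keq : kEquiv 2 ((h ++ [b]) ++ (a :: (U₁ ++ U₂))) ((h ++ [b]) ++ v') := by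
                        have := kml.symm.trans hk
                        simpa [List.append_assoc, kEquiv] using this
                      have := ih (a :: (U₁ ++ U₂)) v' (h ++ [b]) hlen2 keq
                      simpa [List.append_assoc] using this

end Stmt4Aux

/-- Characterization of 2-piecewise testability on a minimal partially ordered and
confluent DFA (Lemma 7 of the paper). -/
theorem stmt4 {α σ : Type*} [Fintype α] [Fintype σ] (A : DFA α σ)
    (hmin : IsMinimalDFA A) (hpo : IsPartiallyOrderedDFA A) (hconf : IsConfluentDFA A) :
    IsPT 2 A.accepts ↔
      ∀ (a : α) (p : σ), (∃ w : List α, A.eval w = p ∧ a ∈ w) →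
        ∀ u : List α, A.evalFrom p (u ++ [a]) = A.evalFrom p (a :: (u ++ [a])) := by
  constructor
  · intro hPT a p hp u
    obtain ⟨w, hw, haw⟩ := hp
    subst hw
    apply hmin.2
    intro z
    have E : ∀ X : List α, A.evalFrom (A.evalFrom (A.eval w) X) z = A.eval ((w ++ X) ++ z) := by
      intro X
      rw [Stmt4Aux.eval_append, Stmt4Aux.eval_append]
    rw [E, E]
    have key : kEquiv 2 ((w ++ (u ++ [a])) ++ z) ((w ++ (a :: (u ++ [a]))) ++ z) := by
      have := Stmt4Aux.KL1 (x := w) (c := a) (y := (u ++ [a]) ++ z) haw (by simp)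
      simpa [List.append_assoc, kEquiv] using this.symm
    exact (A.mem_accepts).symm.trans ((hPT _ _ key).trans A.mem_accepts)
  · intro hcond u v hk
    have := Stmt4Aux.main A hcond hpo hconf (u.length + v.length) u v [] le_rfl
      (by simpa using hk)
    simp only [List.nil_append] at this
    rw [DFA.mem_accepts, DFA.mem_accepts, this]
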